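/- Lower semicontinuity of the non-centered maximal operator under weak convergence: let μ be a Borel measure on a metric space X with all closed balls of finite measure, and let ν_n be finite Borel measures converging weakly to a finite Borel measure ν. Then for every x in the support of μ, liminf_{n→∞} M_μ ν_n(x) ≥ M_μ ν(x), where M_μ ν(x) = sup_{closed balls B ∋ x} ν(B)/μ(B) (with the convention 0 when μ(B)=0). -/

import Mathlib

open MeasureTheory Metric ENNReal Filter
open scoped NNReal BoundedContinuousFunction

/-- A set is a (nondegenerate) closed ball. -/
def IsClosedBall {X : Type*} [MetricSpace X] (B : Set X) : Prop :=
  ∃ (c : X) (r : ℝ), 0 < r ∧ B = Metric.closedBall c r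

/-- The support of a measure: points all of whose neighborhoods have positive measure. -/
def suppM {X : Type*} [MetricSpace X] [MeasurableSpace X] (μ : Measure X) : Set X :=
  {x | ∀ r > (0 : ℝ), 0 < μ (Metric.ball x r)}

/-- Average of `f` over a set, declared `0` when the set is `μ`-null. -/
noncomputable def avg {X : Type*} [MetricSpace X] [MeasurableSpace X]
    (μ : Measure X) (f : X → ℝ≥0∞) (B : Set X) : ℝ≥0∞ :=
  if μ B = 0 then 0 else (∫⁻ y in B, f y ∂μ) / μ B

/-- Centered Hardy–Littlewood maximal function. -/
noncomputable def Mc {X : Type*} [MetricSpace X] [MeasurableSpace X]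
    (μ : Measure X) (f : X → ℝ≥0∞) (x : X) : ℝ≥0∞ :=
  ⨆ r > (0 : ℝ), avg μ f (Metric.closedBall x r)

/-- Non-centered Hardy–Littlewood maximal function. -/
noncomputable def Munc {X : Type*} [MetricSpace X] [MeasurableSpace X]
    (μ : Measure X) (f : X → ℝ≥0∞) (x : X) : ℝ≥0∞ :=
  ⨆ B ∈ {B : Set X | IsClosedBall B ∧ x ∈ B}, avg μ f B

/-- Ratio of measures with the convention `0` when the denominator vanishes. -/
noncomputable def ratio0 {X : Type*} [MeasurableSpace X] (μ ν : MeasureTheory.Measure X) (B : Set X) : ℝ≥0∞ :=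
  if μ B = 0 then 0 else ν B / μ B

/-- Centered maximal function of a measure `ν` with respect to `μ`. -/
noncomputable def McMeas {X : Type*} [MetricSpace X] [MeasurableSpace X]
    (μ ν : Measure X) (x : X) : ℝ≥0∞ :=
  ⨆ r > (0 : ℝ), ratio0 μ ν (Metric.closedBall x r)

/-- Non-centered maximal function of a measure `ν` with respect to `μ`. -/
noncomputable def MuncMeas {X : Type*} [MetricSpace X] [MeasurableSpace X]
    (μ ν : Measure X) (x : X) : ℝ≥0∞ :=
  ⨆ B ∈ {B : Set X | IsClosedBall B ∧ x ∈ B}, ratio0 μ ν B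
lemma open_liminf_aux {X : Type*} [MetricSpace X] [MeasurableSpace X] [BorelSpace X]
    (ν : ℕ → Measure X) (νlim : Measure X)
    [∀ n, IsFiniteMeasure (ν n)] [IsFiniteMeasure νlim]
    (hlin : ∀ f : X →ᵇ ℝ≥0,
      Tendsto (fun n => ∫⁻ z, f z ∂(ν n)) atTop (nhds (∫⁻ z, f z ∂νlim)))
    {G : Set X} (hG : IsOpen G) :
    νlim G ≤ liminf (fun n => ν n G) atTop := by
  by_cases hGc : Gᶜ.Nonempty
  · -- approximate the indicator of G from below
    have cont : ∀ k : ℕ, Continuous (fun y : X => min 1 ((k + 1 : ℝ) * infDist y Gᶜ)) :=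
      fun k => continuous_const.min (continuous_const.mul (continuous_infDist_pt Gᶜ))
    have hmem : ∀ (k : ℕ) (y : X), min 1 ((k + 1 : ℝ) * infDist y Gᶜ) ∈ Set.Icc (0:ℝ) 1 := by
      intro k y
      constructor
      · exact le_min zero_le_one (mul_nonneg (by positivity) infDist_nonneg)
      · exact min_le_left _ _
    set g : ℕ → X →ᵇ ℝ := fun k =>
      BoundedContinuousFunction.mkOfBound ⟨fun y => min 1 ((k + 1 : ℝ) * infDist y Gᶜ), cont k⟩ 1
        (by
          intro y z
          rw [Real.dist_eq]
          have h1 := hmem k y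
          have h2 := hmem k z
          simp only [ContinuousMap.coe_mk]
          rw [abs_sub_le_iff]
          constructor <;> [skip; skip] <;>
            · simp only [Set.mem_Icc] at h1 h2; linarith [h1.1, h1.2, h2.1, h2.2]) with hg
    set f : ℕ → X →ᵇ ℝ≥0 := fun k => (g k).nnrealPart with hf
    have hfval : ∀ (k : ℕ) (y : X), ((f k y : ℝ≥0) : ℝ≥0∞)
        = ENNReal.ofReal (min 1 ((k + 1 : ℝ) * infDist y Gᶜ)) := by
      intro k y
      simp [hf, hg, BoundedContinuousFunction.nnrealPart_coeFn_eq, ENNReal.ofReal]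
    have hmono : Monotone (fun k : ℕ => fun y : X => ((f k y : ℝ≥0) : ℝ≥0∞)) := by
      intro k m hkm
      intro y
      show ((f k y : ℝ≥0) : ℝ≥0∞) ≤ ((f m y : ℝ≥0) : ℝ≥0∞)
      rw [hfval, hfval]
      apply ENNReal.ofReal_le_ofReal
      apply min_le_min le_rfl
      have : (k + 1 : ℝ) ≤ (m + 1 : ℝ) := by exact_mod_cast Nat.succ_le_succ hkm
      exact mul_le_mul_of_nonneg_right this (infDist_nonneg)
    have hsup : ∀ y : X, (⨆ k : ℕ, ((f k y : ℝ≥0) : ℝ≥0∞)) = G.indicator 1 y := by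
      intro y
      by_cases hy : y ∈ G
      · have hd : 0 < infDist y Gᶜ :=
          (hG.isClosed_compl.notMem_iff_infDist_pos hGc).mp (by simpa using hy)
        rw [Set.indicator_of_mem hy]
        simp only [Pi.one_apply]
        apply le_antisymm
        · refine iSup_le fun k => ?_
          rw [hfval]
          calc ENNReal.ofReal (min 1 ((k + 1 : ℝ) * infDist y Gᶜ))
              ≤ ENNReal.ofReal 1 := ENNReal.ofReal_le_ofReal (min_le_left _ _)
            _ = 1 := ENNReal.ofReal_one
        · obtain ⟨k, hk⟩ := exists_nat_ge (1 / infDist y Gᶜ)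
          refine le_iSup_of_le k ?_
          rw [hfval]
          have h1 : (1 : ℝ) ≤ (k + 1 : ℝ) * infDist y Gᶜ := by
            rw [div_le_iff₀ hd] at hk
            nlinarith
          rw [min_eq_left h1, ENNReal.ofReal_one]
      · rw [Set.indicator_of_notMem hy]
        have : infDist y Gᶜ = 0 := infDist_zero_of_mem (by simpa using hy)
        refine le_antisymm (iSup_le fun k => ?_) zero_le
        rw [hfval, this]
        simp
    have hfil : ∀ (k : ℕ) (mν : Measure X), ∫⁻ y, ((f k y : ℝ≥0) : ℝ≥0∞) ∂mν ≤ mν G := by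
      intro k mν
      calc ∫⁻ y, ((f k y : ℝ≥0) : ℝ≥0∞) ∂mν ≤ ∫⁻ y, G.indicator 1 y ∂mν := by
            apply lintegral_mono fun y => ?_
            rw [← hsup y]
            exact le_iSup (fun k => ((f k y : ℝ≥0) : ℝ≥0∞)) k
        _ = mν G := lintegral_indicator_one hG.measurableSet
    have hlim : ∫⁻ y, (⨆ k : ℕ, ((f k y : ℝ≥0) : ℝ≥0∞)) ∂νlim
        = ⨆ k : ℕ, ∫⁻ y, ((f k y : ℝ≥0) : ℝ≥0∞) ∂νlim :=
      lintegral_iSup (f := fun k y => ((f k y : ℝ≥0) : ℝ≥0∞))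
        (fun k => measurable_coe_nnreal_ennreal.comp (f k).continuous.measurable) hmono
    have hGeq : νlim G = ⨆ k : ℕ, ∫⁻ y, ((f k y : ℝ≥0) : ℝ≥0∞) ∂νlim := by
      rw [← hlim, lintegral_congr hsup, lintegral_indicator_one hG.measurableSet]
    rw [hGeq]
    refine iSup_le fun k => ?_
    have := (hlin (f k)).liminf_eq
    rw [← this]
    exact liminf_le_liminf (Eventually.of_forall fun n => hfil k (ν n))
  · have hUniv : G = Set.univ := by
      rw [← Set.compl_empty_iff]
      exact Set.not_nonempty_iff_eq_empty.mp hGc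
    subst hUniv
    have h1 := hlin (BoundedContinuousFunction.const X (1 : ℝ≥0))
    simp only [BoundedContinuousFunction.const_apply, ENNReal.coe_one, lintegral_one] at h1
    rw [← h1.liminf_eq]

/-- Lower semicontinuity of the non-centered maximal operator under weak convergence. -/
theorem liminf_uncentered_maximal {X : Type*} [MetricSpace X] [MeasurableSpace X] [BorelSpace X]
    (μ : Measure X) (hfin : ∀ (c : X) (r : ℝ), μ (closedBall c r) ≠ ∞)
    (hsupp : (suppM μ).Nonempty)
    (ν : ℕ → Measure X) (νlim : Measure X)
    [∀ n, IsFiniteMeasure (ν n)] [IsFiniteMeasure νlim]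
    (hweak : ∀ g : BoundedContinuousFunction X ℝ,
      Tendsto (fun n => ∫ z, g z ∂(ν n)) atTop (nhds (∫ z, g z ∂νlim)))
    (x : X) (hx : x ∈ suppM μ) :
    MuncMeas μ νlim x ≤ liminf (fun n => MuncMeas μ (ν n) x) atTop := by
  -- convert weak convergence of integrals to convergence of finite measures
  have hT := (FiniteMeasure.tendsto_iff_forall_integral_tendsto
      (μs := fun n => (⟨ν n, inferInstance⟩ : FiniteMeasure X))
      (μ := (⟨νlim, inferInstance⟩ : FiniteMeasure X)) (F := atTop)).mpr hweak
  have hlin := FiniteMeasure.tendsto_iff_forall_lintegral_tendsto.mp hT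
  have hopen : ∀ G : Set X, IsOpen G → νlim G ≤ liminf (fun n => ν n G) atTop :=
    fun G hG => open_liminf_aux ν νlim hlin hG
  rw [MuncMeas]
  refine iSup_le fun B => iSup_le fun hB => ?_
  obtain ⟨⟨c, r, hr, rfl⟩, hxB⟩ := hB
  by_cases hμ : μ (closedBall c r) = 0
  · simp [ratio0, hμ]
  rw [ratio0, if_neg hμ]
  have key : ∀ k : ℕ, νlim (closedBall c r) / μ (closedBall c (r + 1 / (k + 1)))
      ≤ liminf (fun n => MuncMeas μ (ν n) x) atTop := by
    intro k
    set r' := r + 1 / ((k : ℝ) + 1) with hr'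
    have hrr' : r < r' := lt_add_of_pos_right r (by positivity)
    have hμ' : μ (closedBall c r') ≠ 0 := fun h =>
      hμ (measure_mono_null (closedBall_subset_closedBall hrr'.le) h)
    have hb : ∀ n, ν n (ball c r') / μ (closedBall c r') ≤ MuncMeas μ (ν n) x := by
      intro n
      have h1 : ν n (ball c r') / μ (closedBall c r')
          ≤ ratio0 μ (ν n) (closedBall c r') := by
        rw [ratio0, if_neg hμ']
        gcongr
        exact ball_subset_closedBall
      refine h1.trans ?_
      refine le_iSup₂_of_le (closedBall c r') ?_ le_rfl
      exact ⟨⟨c, r', hr.trans hrr', rfl⟩, closedBall_subset_closedBall hrr'.le hxB⟩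
    calc νlim (closedBall c r) / μ (closedBall c r')
        ≤ νlim (ball c r') / μ (closedBall c r') := by
          gcongr
          exact closedBall_subset_ball hrr'
      _ ≤ (liminf (fun n => ν n (ball c r')) atTop) / μ (closedBall c r') := by
          gcongr
          exact hopen _ isOpen_ball
      _ ≤ liminf (fun n => ν n (ball c r') / μ (closedBall c r')) atTop := by
          have := ENNReal.le_liminf_mul (f := atTop) (u := fun n => ν n (ball c r'))
            (v := fun _ : ℕ => (μ (closedBall c r'))⁻¹)
          simp only [liminf_const] at this
          simpa [div_eq_mul_inv, Pi.mul_def] using this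
      _ ≤ liminf (fun n => MuncMeas μ (ν n) x) atTop :=
          liminf_le_liminf (Eventually.of_forall hb)
  have hiter : Tendsto (fun k : ℕ => μ (closedBall c (r + 1 / (k + 1)))) atTop
      (nhds (μ (closedBall c r))) := by
    have hint : ⋂ k : ℕ, closedBall c (r + 1 / ((k : ℝ) + 1)) = closedBall c r := by
      ext y
      simp only [Set.mem_iInter, mem_closedBall]
      constructor
      · intro h
        have ht : Tendsto (fun k : ℕ => r + 1 / ((k : ℝ) + 1)) atTop (nhds r) := by
          have := tendsto_one_div_add_atTop_nhds_zero_nat (𝕜 := ℝ)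
          simpa using tendsto_const_nhds.add this
        exact ge_of_tendsto' ht h
      · intro h k
        have : (0 : ℝ) < 1 / ((k : ℝ) + 1) := by positivity
        linarith
    have := tendsto_measure_iInter_atTop (μ := μ)
      (s := fun k : ℕ => closedBall c (r + 1 / ((k : ℝ) + 1)))
      (fun k => measurableSet_closedBall.nullMeasurableSet)
      (fun k m hkm => closedBall_subset_closedBall (by
        have : 1 / ((m : ℝ) + 1) ≤ 1 / ((k : ℝ) + 1) := by
          apply one_div_le_one_div_of_le (by positivity)
          exact_mod_cast Nat.succ_le_succ hkm
        linarith))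
      ⟨0, hfin c _⟩
    rw [hint] at this
    exact this
  have hdiv : Tendsto (fun k : ℕ => νlim (closedBall c r) / μ (closedBall c (r + 1 / (k + 1))))
      atTop (nhds (νlim (closedBall c r) / μ (closedBall c r))) :=
    ENNReal.Tendsto.const_div hiter (Or.inl (hfin c r))
  exact le_of_tendsto hdiv (Eventually.of_forall key)
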